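/- Let D be a discrete topological space of cardinality ω₁. Then the hyperspace F(D) of nonempty finite subsets of D with the Fell topology does not have an ω^ω-base; in fact, for any point x ∈ D, the singleton {x} has no ω^ω-base of neighborhoods in (F(D), τ_F). -/

import Mathlib

open Set Filter Topology

/-- `CL X`: the nonempty closed subsets of `X`. -/
abbrev CL (X : Type*) [TopologicalSpace X] := {A : Set X // A.Nonempty ∧ IsClosed A}

/-- An `ω^ω`-base of neighborhoods at a point `y` of a space with topology `t`:
a neighborhood base `{U_α : α ∈ ω^ω}` with `U_β ⊆ U_α` whenever `α ≤ β` pointwise. -/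
def HasOmegaOmegaBaseAt {Y : Type*} (t : TopologicalSpace Y) (y : Y) : Prop :=
  ∃ U : (ℕ → ℕ) → Set Y, (∀ α, U α ∈ @nhds Y t y) ∧
    (∀ α β : ℕ → ℕ, α ≤ β → U β ⊆ U α) ∧
    ∀ V ∈ @nhds Y t y, ∃ α, U α ⊆ V

/-- The Vietoris topology on `CL X`, generated by the sets `U⁺` and `U⁻` for `U` open. -/
def vietoris (X : Type*) [TopologicalSpace X] : TopologicalSpace (CL X) :=
  TopologicalSpace.generateFrom
    ({S | ∃ U : Set X, IsOpen U ∧ S = {A : CL X | (A : Set X) ⊆ U}} ∪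
     {S | ∃ U : Set X, IsOpen U ∧ S = {A : CL X | ((A : Set X) ∩ U).Nonempty}})

/-- The Fell topology on `CL X`, generated by the sets `U⁻` for `U` open and
`(Kᶜ)⁺` for `K` compact. -/
def fell (X : Type*) [TopologicalSpace X] : TopologicalSpace (CL X) :=
  TopologicalSpace.generateFrom
    ({S | ∃ U : Set X, IsOpen U ∧ S = {A : CL X | ((A : Set X) ∩ U).Nonempty}} ∪
     {S | ∃ K : Set X, IsCompact K ∧ S = {A : CL X | (A : Set X) ⊆ Kᶜ}})

/-- `FH X`: the nonempty finite subsets of `X`. -/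
abbrev FH (X : Type*) := {A : Set X // A.Finite ∧ A.Nonempty}

/-- The Fell topology on the hyperspace of nonempty finite subsets: subbase
`U⁻` for `U` open and `(Kᶜ)⁺` for `K` compact, `K ≠ X`. -/
def fellF (X : Type*) [TopologicalSpace X] : TopologicalSpace (FH X) :=
  TopologicalSpace.generateFrom
    ({S | ∃ U : Set X, IsOpen U ∧ S = {A : FH X | ((A : Set X) ∩ U).Nonempty}} ∪
     {S | ∃ K : Set X, IsCompact K ∧ K ≠ Set.univ ∧ S = {A : FH X | (A : Set X) ⊆ Kᶜ}})

/-! ### Auxiliary combinatorics: every uncountable family in `ω^ω` (with the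
pointwise order) contains an infinite pointwise-bounded subfamily. -/

section Comb

variable {Y : Type*}

open Classical in
/-- One step of the refinement: shrink `A` to an uncountable fiber of the `n`-th
coordinate of `g`, remembering and removing a chosen point of that fiber. -/
noncomputable def combStep (g : Y → ℕ → ℕ) (n : ℕ) (A : Set Y) [Nonempty Y] : Set Y × Y :=
  if h : ∃ z, z ∈ A ∧ ¬ ({y ∈ A | g y n = g z n}).Countable then
    ({y ∈ A | g y n = g h.choose n} \ {h.choose}, h.choose)
  else (∅, Classical.arbitrary Y)

/-- Iterate `combStep`. -/
noncomputable def combIter (g : Y → ℕ → ℕ) (S : Set Y) [Nonempty Y] : ℕ → Set Y × Y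
  | 0 => (S, Classical.arbitrary Y)
  | n + 1 => combStep g n (combIter g S n).1

lemma exists_uncountable_fiber (g : Y → ℕ → ℕ) (n : ℕ) {A : Set Y} (hA : ¬ A.Countable) :
    ∃ z, z ∈ A ∧ ¬ ({y ∈ A | g y n = g z n}).Countable := by
  by_contra hcon
  push_neg at hcon
  apply hA
  have hsub : A ⊆ ⋃ m : ℕ, {y ∈ A | g y n = m} := fun y hy => mem_iUnion.2 ⟨g y n, hy, rfl⟩
  refine (Set.countable_iUnion (fun m => ?_)).mono hsub
  rcases Set.eq_empty_or_nonempty {y ∈ A | g y n = m} with he | ⟨z, hz⟩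
  · simp [he]
  · rw [← hz.2]
    exact hcon z hz.1

lemma comb [Nonempty Y] (g : Y → ℕ → ℕ) {S : Set Y} (hS : ¬ S.Countable) :
    ∃ (w : ℕ → Y) (β : ℕ → ℕ), Function.Injective w ∧ (∀ n, w n ∈ S) ∧
      ∀ n, g (w n) ≤ β := by
  classical
  set A : ℕ → Set Y := fun n => (combIter g S n).1 with hA
  set w : ℕ → Y := fun n => (combIter g S (n + 1)).2 with hw
  have hA0 : A 0 = S := rfl
  have hc : ∀ n, ¬ (A n).Countable := by
    intro n
    induction n with
    | zero => simpa [hA0] using hS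
    | succ n ih =>
      have h := exists_uncountable_fiber g n ih
      have hAeq : A (n + 1) = {y ∈ A n | g y n = g h.choose n} \ {h.choose} := by
        simp only [hA, combIter, combStep, dif_pos (show ∃ z ∈ (combIter g S n).1, ¬{y | y ∈ (combIter g S n).1 ∧ g y n = g z n}.Countable from h)]
      rw [hAeq]
      intro hcnt
      apply h.choose_spec.2
      exact ((hcnt.union (Set.countable_singleton _)).mono (Set.subset_diff_union _ _))
  have hfacts : ∀ n, w n ∈ A n ∧ w n ∉ A (n + 1) ∧ A (n + 1) ⊆ A n ∧
      ∀ z ∈ A (n + 1), g z n = g (w n) n := by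
    intro n
    have h := exists_uncountable_fiber g n (hc n)
    have hweq : w n = h.choose := by
      simp only [hw, combIter, combStep, dif_pos (show ∃ z ∈ (combIter g S n).1, ¬{y | y ∈ (combIter g S n).1 ∧ g y n = g z n}.Countable from h)]
    have hAeq : A (n + 1) = {y ∈ A n | g y n = g h.choose n} \ {h.choose} := by
      simp only [hA, combIter, combStep, dif_pos (show ∃ z ∈ (combIter g S n).1, ¬{y | y ∈ (combIter g S n).1 ∧ g y n = g z n}.Countable from h)]
    refine ⟨?_, ?_, ?_, ?_⟩
    · rw [hweq]; exact h.choose_spec.1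
    · rw [hAeq, hweq]; intro hmem; exact hmem.2 rfl
    · rw [hAeq]; intro z hz; exact hz.1.1
    · intro z hz
      rw [hAeq] at hz
      rw [hweq]
      exact hz.1.2
  have hanti : Antitone A := antitone_nat_of_succ_le (fun n => (hfacts n).2.2.1)
  have hwS : ∀ n, w n ∈ S := fun n => hA0 ▸ hanti (Nat.zero_le n) (hfacts n).1
  have hne : ∀ {k n : ℕ}, k < n → w n ≠ w k := by
    intro k n hkn heq
    have h1 : w n ∈ A (k + 1) := hanti hkn (hfacts n).1
    rw [heq] at h1
    exact (hfacts k).2.1 h1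
  have hinj : Function.Injective w := by
    intro a b hab
    by_contra hne'
    rcases lt_or_gt_of_ne hne' with h | h
    · exact hne h hab.symm
    · exact hne h hab
  refine ⟨w, fun k => Finset.sup (Finset.range (k + 1)) (fun n => g (w n) k), hinj, hwS, ?_⟩
  intro n k
  rcases le_or_gt n k with h | h
  · exact Finset.le_sup (f := fun m => g (w m) k) (Finset.mem_range.2 (Nat.lt_succ_of_le h))
  · have h1 : w n ∈ A (k + 1) := hanti h (hfacts n).1
    have h2 : g (w n) k = g (w k) k := (hfacts k).2.2.2 _ h1
    have h3 : g (w k) k ≤ (Finset.range (k + 1)).sup (fun m => g (w m) k) :=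
      Finset.le_sup (f := fun m => g (w m) k) (Finset.mem_range.2 (Nat.lt_succ_self k))
    calc g (w n) k = g (w k) k := h2
      _ ≤ _ := h3

end Comb

/-! ### Topological auxiliaries -/

/-- The pair `{x, y}` as a nonempty finite set. -/
def pairFH {D : Type*} (x y : D) : FH D :=
  ⟨{x, y}, (Set.finite_singleton y).insert x, ⟨x, Set.mem_insert _ _⟩⟩

/-- Every Fell neighborhood of `{x}` in a discrete space contains all pairs `{x, y}`
with `y` outside some finite set. -/
lemma fellF_nhds_pairs {D : Type*} [TopologicalSpace D] [DiscreteTopology D] (x : D)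
    {V : Set (FH D)}
    (hV : V ∈ @nhds _ (fellF D) ⟨{x}, Set.finite_singleton x, Set.singleton_nonempty x⟩) :
    ∃ K : Set D, K.Finite ∧ ∀ y ∉ K, pairFH x y ∈ V := by
  classical
  unfold fellF at hV
  rw [TopologicalSpace.nhds_generateFrom, ← Filter.generate_eq_biInf,
    Filter.mem_generate_iff] at hV
  obtain ⟨t, htsub, htfin, htV⟩ := hV
  have hKs : ∀ s : Set (FH D), ∃ Ks : Set D, Ks.Finite ∧ (s ∈ t → ∀ y ∉ Ks, pairFH x y ∈ s) := by
    intro s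
    by_cases hs : s ∈ t
    · obtain ⟨hx0, hsub⟩ := htsub hs
      rcases hsub with ⟨U, hU, rfl⟩ | ⟨K, hK, hKne, rfl⟩
      · have hxU : x ∈ U := by
          obtain ⟨z, hz1, hz2⟩ := hx0
          rwa [Set.mem_singleton_iff.1 hz1] at hz2
        exact ⟨∅, Set.finite_empty, fun _ y _ => ⟨x, Set.mem_insert _ _, hxU⟩⟩
      · have hxK : x ∉ K := by
          have := hx0 (Set.mem_singleton x)
          simpa using this
        refine ⟨K, isCompact_iff_finite.1 hK, fun _ y hy => ?_⟩
        intro z hz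
        rcases hz with rfl | hz
        · simpa using hxK
        · rw [Set.mem_singleton_iff.1 hz]
          simpa using hy
    · exact ⟨∅, Set.finite_empty, fun h => absurd h hs⟩
  choose Ks hKfin hKmem using hKs
  refine ⟨⋃ s ∈ t, Ks s, htfin.biUnion (fun s _ => hKfin s), ?_⟩
  intro y hy
  apply htV
  rw [Set.mem_sInter]
  intro s hs
  exact hKmem s hs y (fun h => hy (Set.mem_biUnion hs h))

/-- In a space where singletons are not the whole space, `({y}ᶜ)⁺` is a Fell
neighborhood of `{x}` whenever `x ≠ y`. -/
lemma fellF_avoid_nhds {D : Type*} [TopologicalSpace D] [DiscreteTopology D] {x y : D}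
    (hxy : x ≠ y) (hne : ({y} : Set D) ≠ Set.univ) :
    {A : FH D | (A : Set D) ⊆ ({y} : Set D)ᶜ} ∈
      @nhds _ (fellF D) ⟨{x}, Set.finite_singleton x, Set.singleton_nonempty x⟩ := by
  letI : TopologicalSpace (FH D) := fellF D
  have hopen : IsOpen {A : FH D | (A : Set D) ⊆ ({y} : Set D)ᶜ} :=
    TopologicalSpace.isOpen_generateFrom_of_mem
      (Or.inr ⟨{y}, isCompact_singleton, hne, rfl⟩)
  exact hopen.mem_nhds (by simpa using hxy.symm)

/-- If `D` is discrete of cardinality `ω₁`, then for every `x ∈ D` the point `{x}`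
of `(F(D), τ_F)` has no `ω^ω`-base of neighborhoods; in particular `(F(D), τ_F)`
does not have an `ω^ω`-base. -/
theorem finiteHyperspace_fell_discrete_omega1_no_omegaOmegaBase
    {D : Type*} [TopologicalSpace D] [DiscreteTopology D]
    (hD : Cardinal.mk D = Cardinal.aleph 1) (x : D) :
    ¬ HasOmegaOmegaBaseAt (fellF D)
        ⟨{x}, Set.finite_singleton x, Set.singleton_nonempty x⟩ := by
  classical
  rintro ⟨U, hnhds, hmono, hbase⟩
  have : Nonempty D := ⟨x⟩
  have hDun : ¬ (Set.univ : Set D).Countable := by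
    intro h
    have : Countable D := Set.countable_univ_iff.1 h
    have hle : Cardinal.mk D ≤ Cardinal.aleph0 := Cardinal.mk_le_aleph0
    rw [hD] at hle
    exact absurd hle (not_le.2 Cardinal.aleph0_lt_aleph_one)
  have hcomplx : ¬ ({x}ᶜ : Set D).Countable := by
    intro h
    apply hDun
    have h2 : (insert x ({x}ᶜ : Set D)).Countable := h.insert x
    refine h2.mono ?_
    intro z _
    by_cases hz : z = x
    · exact Or.inl hz
    · exact Or.inr hz
  have hsingne : ∀ y : D, ({y} : Set D) ≠ Set.univ := by
    intro y h
    apply hDun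
    rw [← h]
    exact Set.countable_singleton y
  have hg : ∀ y : D, ∃ α : ℕ → ℕ, y ≠ x → pairFH x y ∉ U α := by
    intro y
    by_cases hy : y = x
    · exact ⟨fun _ => 0, fun h => absurd hy h⟩
    · obtain ⟨α, hα⟩ := hbase _ (fellF_avoid_nhds (Ne.symm hy) (hsingne y))
      refine ⟨α, fun _ hmem => ?_⟩
      have hsub : ({x, y} : Set D) ⊆ ({y} : Set D)ᶜ := hα hmem
      exact hsub (Set.mem_insert_iff.2 (Or.inr rfl)) rfl
  choose g hgspec using hg
  obtain ⟨w, β, hinj, hwS, hwb⟩ := comb g hcomplx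
  obtain ⟨K, hKfin, hKmem⟩ := fellF_nhds_pairs x (hnhds β)
  have hiex : ∃ n, w n ∉ K := by
    by_contra h
    push_neg at h
    exact Set.infinite_range_of_injective hinj
      (hKfin.subset (Set.range_subset_iff.2 h))
  obtain ⟨n, hn⟩ := hiex
  have h1 : pairFH x (w n) ∈ U β := hKmem (w n) hn
  have h2 : pairFH x (w n) ∉ U β := by
    intro hmem
    have hwx : w n ≠ x := by simpa using hwS n
    exact hgspec (w n) hwx (hmono _ _ (hwb n) hmem)
  exact h2 h1
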